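/- Let X = f(u)ψ(u) and Y = f(u)ψ̄(u) under u ∼ π_θ as in the scalar CAPG setting, and suppose additionally a baseline b ∈ ℝ is subtracted: X' = (f(u) - b)ψ(u), Y' = (f(u) - b)ψ̄(u). Then E[Y'] = E[X'] = E[X] - b·E[ψ(u)] = E[X], assuming the score has zero mean, and Var[Y'] ≤ Var[X']. -/

import Mathlib

open MeasureTheory Set

/-- Expectation of `g` under the density `p` (w.r.t. Lebesgue measure). -/
noncomputable def Epi (p g : ℝ → ℝ) : ℝ := ∫ u, g u * p u

/-- Variance of `g` under the density `p`. -/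
noncomputable def Vpi (p g : ℝ → ℝ) : ℝ := ∫ u, (g u - Epi p g)^2 * p u

lemma split3 {a c : ℝ} (hac : a < c) (G : ℝ → ℝ) (hG : Integrable G) :
    ∫ u, G u = (∫ u in Iic a, G u) + (∫ u in Ioo a c, G u) + (∫ u in Ici c, G u) := by
  have hset1 : Iic a ∪ Ioo a c = Iio c := by
    ext u; simp only [mem_union, mem_Iic, mem_Ioo, mem_Iio]
    constructor
    · rintro (h | ⟨h1, h2⟩); exacts [lt_of_le_of_lt h hac, h2]
    · intro h; rcases le_or_gt u a with h' | h'
      · exact Or.inl h'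
      · exact Or.inr ⟨h', h⟩
  have hset2 : Iio c ∪ Ici c = univ := Iio_union_Ici
  have hdisj1 : Disjoint (Iic a) (Ioo a c) := by
    rw [Set.disjoint_left]; intro u hu hu'; exact absurd hu'.1 (not_lt.2 hu)
  have hdisj2 : Disjoint (Iio c) (Ici c) := Iio_disjoint_Ici le_rfl
  have h1 : ∫ u in Iio c, G u = (∫ u in Iic a, G u) + ∫ u in Ioo a c, G u := by
    rw [← hset1, setIntegral_union hdisj1 measurableSet_Ioo hG.integrableOn hG.integrableOn]
  have h2 : ∫ u, G u = (∫ u in Iio c, G u) + ∫ u in Ici c, G u := by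
    rw [← setIntegral_univ (f := G), ← hset2,
      setIntegral_union hdisj2 measurableSet_Ici hG.integrableOn hG.integrableOn]
  rw [h2, h1]

lemma var_expand (p g : ℝ → ℝ) (hp1 : ∫ u, p u = 1) (hp : Integrable p)
    (hg : Integrable (fun u => g u * p u)) (hg2 : Integrable (fun u => (g u)^2 * p u)) :
    Vpi p g = (∫ u, (g u)^2 * p u) - (Epi p g)^2 := by
  set m := Epi p g with hm
  have hfun : (fun u => (g u - m)^2 * p u)
      = fun u => ((g u)^2 * p u - (2*m) * (g u * p u)) + m^2 * p u := by
    funext u; ring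
  have hA : Integrable (fun u => (g u)^2 * p u - (2*m) * (g u * p u)) := hg2.sub (hg.const_mul _)
  have hB : Integrable (fun u => m^2 * p u) := hp.const_mul _
  rw [Vpi, hfun, integral_add hA hB, integral_sub hg2 (hg.const_mul _),
    integral_const_mul, integral_const_mul, hp1,
    show ∫ u, g u * p u = m from rfl]
  ring

lemma side_ineq (p ψ : ℝ → ℝ) (S : Set ℝ) (hS : MeasurableSet S)
    (hpnn : ∀ u, 0 ≤ p u) (c d : ℝ)
    (hψp : IntegrableOn (fun u => ψ u * p u) S)
    (hψ2p : IntegrableOn (fun u => (c * ψ u)^2 * p u) S)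
    (hp : IntegrableOn p S)
    (hmean : ∫ u in S, ψ u * p u = d * ∫ u in S, p u) :
    (c*d)^2 * (∫ u in S, p u) ≤ ∫ u in S, (c * ψ u)^2 * p u := by
  have h0 : 0 ≤ ∫ u in S, (c*ψ u - c*d)^2 * p u :=
    setIntegral_nonneg hS (fun u _ => mul_nonneg (sq_nonneg _) (hpnn u))
  have hexp : (fun u => (c*ψ u - c*d)^2 * p u)
      = fun u => ((c * ψ u)^2 * p u - (2*c^2*d) * (ψ u * p u)) + (c*d)^2 * p u := by
    funext u; ring
  have hA : Integrable (fun u => (c * ψ u)^2 * p u - (2*c^2*d) * (ψ u * p u)) (volume.restrict S) :=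
    hψ2p.sub (hψp.const_mul _)
  have hB : Integrable (fun u => (c*d)^2 * p u) (volume.restrict S) := hp.const_mul _
  rw [hexp, integral_add hA hB, integral_sub hψ2p (hψp.const_mul _),
    integral_const_mul, integral_const_mul, hmean] at h0
  nlinarith [h0]


/-- CAPG with a baseline `b`. Subtracting a constant baseline preserves
unbiasedness (given the zero-mean score property) and the variance inequality:
`E[(f-b)ψ̄] = E[(f-b)ψ] = E[fψ]` and `Var[(f-b)ψ̄] ≤ Var[(f-b)ψ]`. -/
theorem capg_with_baseline
    (p : ℝ → ℝ → ℝ) (p' ψ ψbar f : ℝ → ℝ) (θ α β cA cB b : ℝ) (hαβ : α < β)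
    (hpdf : ∀ t, ∫ u, p t u = 1) (hnn : ∀ t u, 0 ≤ p t u)
    (hp' : ∀ u, HasDerivAt (fun t => p t u) (p' u) θ)
    (hψ : ∀ u, HasDerivAt (fun t => Real.log (p t u)) (ψ u) θ)
    (hswapA : HasDerivAt (fun t => ∫ u in Iic α, p t u) (∫ u in Iic α, p' u) θ)
    (hswapB : HasDerivAt (fun t => ∫ u in Ici β, p t u) (∫ u in Ici β, p' u) θ)
    (hposA : 0 < ∫ u in Iic α, p θ u)
    (hle : (∫ u in Iic α, p θ u) ≤ ∫ u in Iic β, p θ u)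
    (hltB : (∫ u in Iic β, p θ u) < 1)
    (hcA : HasDerivAt (fun t => Real.log (∫ u in Iic α, p t u)) cA θ)
    (hcB : HasDerivAt (fun t => Real.log (1 - ∫ u in Iic β, p t u)) cB θ)
    (hψbar : ∀ u, ψbar u = if u ≤ α then cA else if u < β then ψ u else cB)
    (hfA : ∀ u, u ≤ α → f u = f α) (hfB : ∀ u, β ≤ u → f u = f β)
    (hfbdd : ∃ M : ℝ, ∀ u, |f u| ≤ M)
    (hzero : ∫ u, ψ u * p θ u = 0)
    (hintψ : Integrable (fun u => ψ u * p θ u))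
    (hint2 : Integrable (fun u => ((f u - b) * ψ u)^2 * p θ u))
    (hint1 : Integrable (fun u => (f u - b) * ψ u * p θ u))
    (hint1' : Integrable (fun u => (f u - b) * ψbar u * p θ u))
    (hintf : Integrable (fun u => f u * ψ u * p θ u)) :
    (∫ u, (f u - b) * ψbar u * p θ u = ∫ u, (f u - b) * ψ u * p θ u) ∧
    (∫ u, (f u - b) * ψ u * p θ u = ∫ u, f u * ψ u * p θ u) ∧
    Vpi (p θ) (fun u => (f u - b) * ψbar u) ≤ Vpi (p θ) (fun u => (f u - b) * ψ u) := by
  -- basic integrability of densities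
  have hPt : ∀ t, Integrable (p t) := by
    intro t
    by_contra h
    have := hpdf t
    rw [integral_undef h] at this
    norm_num at this
  have hPint : Integrable (p θ) := hPt θ
  -- pointwise score identity
  have hp'eq : ∀ u, p' u = ψ u * p θ u := by
    intro u
    rcases (hnn θ u).lt_or_eq with hpos | hz
    · have hl := (hp' u).log (ne_of_gt hpos)
      have he : ψ u = p' u / p θ u := (hψ u).unique hl
      rw [he]
      field_simp
    · have hmin : IsLocalMin (fun t => p t u) θ :=
        Filter.Eventually.of_forall (fun t => by
          show p θ u ≤ p t u
          rw [← hz]; exact hnn t u)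
      have := hmin.hasDerivAt_eq_zero (hp' u)
      rw [this, ← hz, mul_zero]
  have hp'fun : p' = fun u => ψ u * p θ u := funext hp'eq
  -- cA identity
  have hlogA := hswapA.log (ne_of_gt hposA)
  have hcAeq : cA = (∫ u in Iic α, p' u) / (∫ u in Iic α, p θ u) := hcA.unique hlogA
  have hintA : ∫ u in Iic α, ψ u * p θ u = cA * ∫ u in Iic α, p θ u := by
    rw [hcAeq, div_mul_cancel₀ _ (ne_of_gt hposA), hp'fun]
  -- cB identity
  have h1t : ∀ t, ∫ u in Ici β, p t u = 1 - ∫ u in Iic β, p t u := by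
    intro t
    have hu : Iic β ∪ Ioi β = (univ : Set ℝ) := Iic_union_Ioi
    have hsplit : (∫ u in Iic β, p t u) + ∫ u in Ioi β, p t u = 1 := by
      rw [← setIntegral_union (Iic_disjoint_Ioi le_rfl) measurableSet_Ioi
        (hPt t).integrableOn (hPt t).integrableOn, hu, setIntegral_univ, hpdf t]
    rw [integral_Ici_eq_integral_Ioi]
    linarith
  have hposB : 0 < ∫ u in Ici β, p θ u := by rw [h1t θ]; linarith
  have hcB' : HasDerivAt (fun t => Real.log (∫ u in Ici β, p t u)) cB θ := by
    have hfn : (fun t => Real.log (∫ u in Ici β, p t u))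
        = fun t => Real.log (1 - ∫ u in Iic β, p t u) := funext fun t => by rw [h1t t]
    rw [hfn]; exact hcB
  have hlogB := hswapB.log (ne_of_gt hposB)
  have hcBeq : cB = (∫ u in Ici β, p' u) / (∫ u in Ici β, p θ u) := hcB'.unique hlogB
  have hintB : ∫ u in Ici β, ψ u * p θ u = cB * ∫ u in Ici β, p θ u := by
    rw [hcBeq, div_mul_cancel₀ _ (ne_of_gt hposB), hp'fun]
  -- ψbar values on the three regions
  have hbarA : ∀ u ∈ Iic α, ψbar u = cA := fun u hu => by rw [hψbar u, if_pos (mem_Iic.mp hu)]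
  have hbarM : ∀ u ∈ Ioo α β, ψbar u = ψ u := fun u hu => by
    rw [hψbar u, if_neg (not_le.2 (mem_Ioo.mp hu).1), if_pos (mem_Ioo.mp hu).2]
  have hbarB : ∀ u ∈ Ici β, ψbar u = cB := fun u hu => by
    rw [hψbar u, if_neg (not_le.2 (lt_of_lt_of_le hαβ (mem_Ici.mp hu))), if_neg (not_lt.2 (mem_Ici.mp hu))]
  -- Part 1 : equality of means
  have part1 : ∫ u, (f u - b) * ψbar u * p θ u = ∫ u, (f u - b) * ψ u * p θ u := by
    rw [split3 hαβ _ hint1', split3 hαβ _ hint1]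
    have eqA : ∫ u in Iic α, (f u - b) * ψbar u * p θ u
        = ∫ u in Iic α, (f u - b) * ψ u * p θ u := by
      have l1 : ∫ u in Iic α, (f u - b) * ψbar u * p θ u
          = ∫ u in Iic α, ((f α - b) * cA) * p θ u :=
        setIntegral_congr_fun measurableSet_Iic (fun u hu => by
          rw [hfA u hu, hbarA u hu])
      have l2 : ∫ u in Iic α, (f u - b) * ψ u * p θ u
          = ∫ u in Iic α, (f α - b) * (ψ u * p θ u) :=
        setIntegral_congr_fun measurableSet_Iic (fun u hu => by
          rw [hfA u hu]; ring)
      rw [l1, l2, integral_const_mul, integral_const_mul, hintA]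
      ring
    have eqM : ∫ u in Ioo α β, (f u - b) * ψbar u * p θ u
        = ∫ u in Ioo α β, (f u - b) * ψ u * p θ u :=
      setIntegral_congr_fun measurableSet_Ioo (fun u hu => by rw [hbarM u hu])
    have eqB : ∫ u in Ici β, (f u - b) * ψbar u * p θ u
        = ∫ u in Ici β, (f u - b) * ψ u * p θ u := by
      have l1 : ∫ u in Ici β, (f u - b) * ψbar u * p θ u
          = ∫ u in Ici β, ((f β - b) * cB) * p θ u :=
        setIntegral_congr_fun measurableSet_Ici (fun u hu => by
          rw [hfB u hu, hbarB u hu])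
      have l2 : ∫ u in Ici β, (f u - b) * ψ u * p θ u
          = ∫ u in Ici β, (f β - b) * (ψ u * p θ u) :=
        setIntegral_congr_fun measurableSet_Ici (fun u hu => by
          rw [hfB u hu]; ring)
      rw [l1, l2, integral_const_mul, integral_const_mul, hintB]
      ring
    rw [eqA, eqM, eqB]
  -- Part 2
  have part2 : ∫ u, (f u - b) * ψ u * p θ u = ∫ u, f u * ψ u * p θ u := by
    have hfn : (fun u => (f u - b) * ψ u * p θ u)
        = fun u => f u * ψ u * p θ u - b * (ψ u * p θ u) := funext fun u => by ring
    rw [hfn, integral_sub hintf (hintψ.const_mul b), integral_const_mul, hzero,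
      mul_zero, sub_zero]
  refine ⟨part1, part2, ?_⟩
  -- Part 3 : variance inequality
  -- integrability of the squared clipped estimator
  have hh2A : IntegrableOn (fun u => ((f u - b) * ψbar u)^2 * p θ u) (Iic α) := by
    refine IntegrableOn.congr_fun (hPint.integrableOn.const_mul (((f α - b) * cA)^2))
      (fun u hu => ?_) measurableSet_Iic
    rw [hfA u hu, hbarA u hu]
  have hh2M : IntegrableOn (fun u => ((f u - b) * ψbar u)^2 * p θ u) (Ioo α β) := by
    refine IntegrableOn.congr_fun hint2.integrableOn (fun u hu => ?_) measurableSet_Ioo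
    rw [hbarM u hu]
  have hh2B : IntegrableOn (fun u => ((f u - b) * ψbar u)^2 * p θ u) (Ici β) := by
    refine IntegrableOn.congr_fun (hPint.integrableOn.const_mul (((f β - b) * cB)^2))
      (fun u hu => ?_) measurableSet_Ici
    rw [hfB u hu, hbarB u hu]
  have huniv : Iic α ∪ (Ioo α β ∪ Ici β) = (univ : Set ℝ) := by
    apply eq_univ_of_forall
    intro u
    rcases le_or_gt u α with h | h
    · exact Or.inl h
    · rcases lt_or_ge u β with h' | h'
      · exact Or.inr (Or.inl ⟨h, h'⟩)
      · exact Or.inr (Or.inr h')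
  have hh2 : Integrable (fun u => ((f u - b) * ψbar u)^2 * p θ u) := by
    rw [← integrableOn_univ, ← huniv]
    exact hh2A.union (hh2M.union hh2B)
  -- variance expansions
  have hv1 := var_expand (p θ) (fun u => (f u - b) * ψbar u) (hpdf θ) hPint hint1' hh2
  have hv2 := var_expand (p θ) (fun u => (f u - b) * ψ u) (hpdf θ) hPint hint1 hint2
  rw [hv1, hv2]
  have hEe : Epi (p θ) (fun u => (f u - b) * ψbar u) = Epi (p θ) (fun u => (f u - b) * ψ u) := part1
  rw [hEe]
  apply sub_le_sub_right
  -- reduce to second moments, split over regions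
  rw [split3 hαβ _ hh2, split3 hαβ _ hint2]
  have ineqA : ∫ u in Iic α, ((f u - b) * ψbar u)^2 * p θ u
      ≤ ∫ u in Iic α, ((f u - b) * ψ u)^2 * p θ u := by
    have l1 : ∫ u in Iic α, ((f u - b) * ψbar u)^2 * p θ u
        = ((f α - b) * cA)^2 * ∫ u in Iic α, p θ u := by
      rw [setIntegral_congr_fun measurableSet_Iic
        (g := fun u => ((f α - b) * cA)^2 * p θ u)
        (fun u hu => by rw [hfA u hu, hbarA u hu]), integral_const_mul]
    have l2 : ∫ u in Iic α, ((f u - b) * ψ u)^2 * p θ u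
        = ∫ u in Iic α, ((f α - b) * ψ u)^2 * p θ u :=
      setIntegral_congr_fun measurableSet_Iic (fun u hu => by rw [hfA u hu])
    rw [l1, l2]
    refine side_ineq (p θ) ψ (Iic α) measurableSet_Iic (hnn θ) (f α - b) cA
      hintψ.integrableOn ?_ hPint.integrableOn hintA
    refine IntegrableOn.congr_fun hint2.integrableOn (fun u hu => ?_) measurableSet_Iic
    rw [hfA u hu]
  have eqM : ∫ u in Ioo α β, ((f u - b) * ψbar u)^2 * p θ u
      = ∫ u in Ioo α β, ((f u - b) * ψ u)^2 * p θ u :=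
    setIntegral_congr_fun measurableSet_Ioo (fun u hu => by rw [hbarM u hu])
  have ineqB : ∫ u in Ici β, ((f u - b) * ψbar u)^2 * p θ u
      ≤ ∫ u in Ici β, ((f u - b) * ψ u)^2 * p θ u := by
    have l1 : ∫ u in Ici β, ((f u - b) * ψbar u)^2 * p θ u
        = ((f β - b) * cB)^2 * ∫ u in Ici β, p θ u := by
      rw [setIntegral_congr_fun measurableSet_Ici
        (g := fun u => ((f β - b) * cB)^2 * p θ u)
        (fun u hu => by rw [hfB u hu, hbarB u hu]), integral_const_mul]
    have l2 : ∫ u in Ici β, ((f u - b) * ψ u)^2 * p θ u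
        = ∫ u in Ici β, ((f β - b) * ψ u)^2 * p θ u :=
      setIntegral_congr_fun measurableSet_Ici (fun u hu => by rw [hfB u hu])
    rw [l1, l2]
    refine side_ineq (p θ) ψ (Ici β) measurableSet_Ici (hnn θ) (f β - b) cB
      hintψ.integrableOn ?_ hPint.integrableOn hintB
    refine IntegrableOn.congr_fun hint2.integrableOn (fun u hu => ?_) measurableSet_Ici
    rw [hfB u hu]
  rw [eqM]
  exact add_le_add (add_le_add_left ineqA _) ineqB
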